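/- Let N ≥ 1 and α, λ₂, q̲ > 0. Let A, P, Q, k, L ∈ ℝ^{N×N} with P, Q, L symmetric, AᵀP + PA = −Q, x̃ᵀQx̃ ≥ q̲‖x̃‖² for all x̃ ∈ ℝ^N, and μ̃ᵀLμ̃ ≥ λ₂‖μ̃‖² for all μ̃ under consideration. Let c = ‖kᵀP‖ be the spectral norm of kᵀP. Then for all x̃, μ̃, z̃, ñ ∈ ℝ^N, x̃ᵀ(AᵀP+PA)x̃ − 2μ̃ᵀkᵀP x̃ + ⟨μ̃, x̃ − αLμ̃ − z̃⟩ + ⟨μ̃ + z̃, x̃ − z̃⟩ − ‖ñ‖² ≤ −(q̲ − 1/2 − c)‖x̃‖² − (αλ₂ − 2 − c)‖μ̃‖² − (1/2)‖z̃‖² − ‖ñ‖². -/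
import Mathlib


open scoped RealInnerProductSpace Matrix

/-- The Lyapunov-derivative estimate in the proof of Theorem 2 for general quadratic
cost functions (lam₂ = λ₂, qlow = q̲ = λ_min(Q); `c = ‖kᵀP‖` is the spectral
(ℓ²-operator) norm of `kᵀP`; xv = x̃, muv = μ̃, zv = z̃, nv = ñ; `ATPPA`, `kTPx`,
`Qx`, `Lmu` are the Euclidean-space representatives of `(AᵀP+PA)x̃`, `(kᵀP)x̃`,
`Qx̃` and `Lμ̃`). -/
theorem lyapunov_estimate_thm2 {N : ℕ} (hN : 1 ≤ N)
    (α lam₂ qlow : ℝ) (hα : 0 < α) (hlam₂ : 0 < lam₂) (hq : 0 < qlow)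
    (A P Q k L : Matrix (Fin N) (Fin N) ℝ)
    (hPsymm : P.IsSymm) (hQsymm : Q.IsSymm) (hLsymm : L.IsSymm)
    (hlyap : Aᵀ * P + P * A = -Q)
    (hQ : ∀ v : EuclideanSpace ℝ (Fin N),
      qlow * ‖v‖ ^ 2 ≤ ⟪v, Matrix.toEuclideanCLM (𝕜 := ℝ) Q v⟫)
    (c : ℝ) (hc : c = ‖Matrix.toEuclideanCLM (𝕜 := ℝ) (kᵀ * P)‖)
    (hL : ∀ v : EuclideanSpace ℝ (Fin N),
      lam₂ * ‖v‖ ^ 2 ≤ ⟪v, Matrix.toEuclideanCLM (𝕜 := ℝ) L v⟫) :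
    ∀ xv muv zv nv : EuclideanSpace ℝ (Fin N),
      ⟪xv, Matrix.toEuclideanCLM (𝕜 := ℝ) (Aᵀ * P + P * A) xv⟫
          - 2 * ⟪muv, Matrix.toEuclideanCLM (𝕜 := ℝ) (kᵀ * P) xv⟫
          + ⟪muv, xv - α • Matrix.toEuclideanCLM (𝕜 := ℝ) L muv - zv⟫
          + ⟪muv + zv, xv - zv⟫ - ‖nv‖ ^ 2 ≤
        -(qlow - 1 / 2 - c) * ‖xv‖ ^ 2 - (α * lam₂ - 2 - c) * ‖muv‖ ^ 2
          - (1 / 2) * ‖zv‖ ^ 2 - ‖nv‖ ^ 2 := by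

  intro xv muv zv nv
  have hQx : ⟪xv, Matrix.toEuclideanCLM (𝕜 := ℝ) (Aᵀ * P + P * A) xv⟫
      = -⟪xv, Matrix.toEuclideanCLM (𝕜 := ℝ) Q xv⟫ := by
    rw [hlyap, map_neg]
    simp [inner_neg_right]
  have hkP : |⟪muv, Matrix.toEuclideanCLM (𝕜 := ℝ) (kᵀ * P) xv⟫| ≤ c * (‖muv‖ * ‖xv‖) := by
    calc |⟪muv, Matrix.toEuclideanCLM (𝕜 := ℝ) (kᵀ * P) xv⟫|
        ≤ ‖muv‖ * ‖Matrix.toEuclideanCLM (𝕜 := ℝ) (kᵀ * P) xv‖ :=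
          abs_real_inner_le_norm _ _
      _ ≤ ‖muv‖ * (c * ‖xv‖) := by
          gcongr
          rw [hc]
          exact (Matrix.toEuclideanCLM (𝕜 := ℝ) (kᵀ * P)).le_opNorm xv
      _ = c * (‖muv‖ * ‖xv‖) := by ring
  have hQb := hQ xv
  have hLb := hL muv
  have hsq : (0:ℝ) ≤ ⟪xv - (2:ℝ) • muv - zv, xv - (2:ℝ) • muv - zv⟫ :=
    real_inner_self_nonneg
  have hcomm1 : ⟪muv, xv⟫ = ⟪xv, muv⟫ := real_inner_comm _ _
  have hcomm2 : ⟪zv, xv⟫ = ⟪xv, zv⟫ := real_inner_comm _ _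
  have hcomm3 : ⟪zv, muv⟫ = ⟪muv, zv⟫ := real_inner_comm _ _
  have habs := abs_le.mp hkP
  rw [hQx]
  simp only [inner_sub_left, inner_sub_right, inner_add_left, inner_smul_left,
    inner_smul_right, real_inner_self_eq_norm_sq, RCLike.inner_apply,
    starRingEnd_apply, star_trivial] at hsq ⊢
  have hLb2 := mul_le_mul_of_nonneg_left hLb hα.le
  have hc0 : 0 ≤ c := hc ▸ norm_nonneg _
  nlinarith [mul_nonneg hc0 (sq_nonneg (‖xv‖ - ‖muv‖)), habs.1, habs.2]
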